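/- Let π: Ỹ → ℂ^{n+1} be the blow-up of the origin restricted over the affine cone X = {Σ_{i=1}^{n+1} x_i^2 = 0}, giving the resolution Y → X with exceptional divisor Q = {Σ X_i^2 = 0} ⊂ ℙ^n. On the affine chart X_{n+1} = 1 of Y, with coordinates X_1,...,X_n,x_{n+1} subject to X_1^2 + ... + X_n^2 + 1 = 0, the pullback π*Ω_X of the cotangent sheaf is the subsheaf of Ω_Y generated by dx_{n+1} and x_{n+1}·dX_i (i = 1,...,n); equivalently π*Ω_X = Ω_Y(log Q)(−Q) where Q is locally {x_{n+1} = 0}. -/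

import Mathlib

/-!
STATEMENT 16: Blow-up chart computation for the ODP.  Let `X = {x_1^2+...+x_{n+1}^2 = 0}`
⊂ ℂ^{n+1}` with coordinate ring `R`, and let the chart `X_{n+1} = 1` of the blow-up `Y`
have coordinate ring `S = ℂ[X_1,...,X_n,x_{n+1}]/(X_1^2+...+X_n^2+1)`, the map `π`
corresponding to `x_i ↦ X_i·x_{n+1}` (`i ≤ n`), `x_{n+1} ↦ x_{n+1}`.  Then the image of
`π^*Ω_X = Ω_{R/ℂ} ⊗_R S` in `Ω_{S/ℂ}` is the `S`-submodule generated by `d x_{n+1}` and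
`x_{n+1}·d X_i` (`i = 1,...,n`); i.e. `π^*Ω_X = Ω_Y(log Q)(−Q)` on this chart, where
`Q = {x_{n+1} = 0}` is the exceptional divisor.
-/

open MvPolynomial

set_option synthInstance.maxHeartbeats 1000000
set_option maxHeartbeats 1000000

noncomputable section

variable (n : ℕ)

/-- `R = ℂ[x_1,...,x_{n+1}]/(Σ x_i^2)`: the coordinate ring of the affine cone `X`. -/
abbrev coneRing :=
  MvPolynomial (Fin (n + 1)) ℂ ⧸
    Ideal.span {∑ i : Fin (n + 1), (X i : MvPolynomial (Fin (n + 1)) ℂ) ^ 2}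

/-- `S = ℂ[X_1,...,X_n,x_{n+1}]/(X_1^2+...+X_n^2+1)`: the chart `X_{n+1} = 1` of the
blow-up (the last variable is `x_{n+1}`, the first `n` are `X_1,...,X_n`). -/
abbrev chartRing :=
  MvPolynomial (Fin (n + 1)) ℂ ⧸
    Ideal.span {(∑ i : Fin n, (X i.castSucc : MvPolynomial (Fin (n + 1)) ℂ) ^ 2) + 1}

/-- The class of the `i`-th variable in `S`. -/
abbrev sVar (i : Fin (n + 1)) : chartRing n := Ideal.Quotient.mk _ (X i)

/-- The blow-down `π^* : R → S`, `x_i ↦ X_i·x_{n+1}` for `i ≤ n`, `x_{n+1} ↦ x_{n+1}`. -/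
def blowDown : coneRing n →ₐ[ℂ] chartRing n :=
  Ideal.Quotient.liftₐ _
    (aeval fun i : Fin (n + 1) =>
      if i = Fin.last n then sVar n (Fin.last n) else sVar n i * sVar n (Fin.last n))
    (by
      intro a ha
      rw [Ideal.mem_span_singleton] at ha
      obtain ⟨c, rfl⟩ := ha
      rw [map_mul]
      have hg : (∑ i : Fin n, sVar n i.castSucc ^ 2) + 1 = 0 := by
        have hmem : ((∑ i : Fin n, (X i.castSucc : MvPolynomial (Fin (n + 1)) ℂ) ^ 2) + 1) ∈
            Ideal.span {(∑ i : Fin n, (X i.castSucc : MvPolynomial (Fin (n + 1)) ℂ) ^ 2) + 1} :=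
          Ideal.subset_span rfl
        have h0 := Ideal.Quotient.eq_zero_iff_mem.mpr hmem
        rw [map_add, map_sum, map_one] at h0
        simp only [map_pow] at h0
        exact h0
      have hf : (aeval fun i : Fin (n + 1) =>
          if i = Fin.last n then sVar n (Fin.last n)
          else sVar n i * sVar n (Fin.last n))
          (∑ i : Fin (n + 1), (X i : MvPolynomial (Fin (n + 1)) ℂ) ^ 2) = 0 := by
        simp only [map_sum, map_pow, aeval_X]
        rw [Fin.sum_univ_castSucc]
        simp only [if_pos rfl]
        have hne : ∀ i : Fin n, (i.castSucc : Fin (n + 1)) ≠ Fin.last n := fun i =>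
          Fin.ne_of_lt (Fin.castSucc_lt_last i)
        calc (∑ i : Fin n,
                (if (i.castSucc : Fin (n + 1)) = Fin.last n then sVar n (Fin.last n)
                  else sVar n i.castSucc * sVar n (Fin.last n)) ^ 2) +
              sVar n (Fin.last n) ^ 2
            = (∑ i : Fin n, sVar n i.castSucc ^ 2) * sVar n (Fin.last n) ^ 2 +
              sVar n (Fin.last n) ^ 2 := by
              rw [Finset.sum_mul]
              congr 1
              refine Finset.sum_congr rfl fun i _ => ?_
              rw [if_neg (hne i)]; ring
          _ = ((∑ i : Fin n, sVar n i.castSucc ^ 2) + 1) * sVar n (Fin.last n) ^ 2 := by ring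
          _ = 0 := by rw [hg, zero_mul]
      rw [hf, zero_mul])

instance : Algebra (coneRing n) (chartRing n) := (blowDown n).toRingHom.toAlgebra

instance : IsScalarTower ℂ (coneRing n) (chartRing n) :=
  IsScalarTower.of_algebraMap_eq fun c => ((blowDown n).commutes c).symm

instance : SMulCommClass ℂ (coneRing n) (chartRing n) :=
  ⟨fun c a s => by rw [Algebra.smul_def a, Algebra.smul_def a]; exact (mul_smul_comm c _ s).symm⟩

lemma algebraMap_mk (p : MvPolynomial (Fin (n + 1)) ℂ) :
    algebraMap (coneRing n) (chartRing n) (Ideal.Quotient.mk _ p) =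
      aeval (fun i : Fin (n + 1) =>
        if i = Fin.last n then sVar n (Fin.last n) else sVar n i * sVar n (Fin.last n)) p :=
  rfl

theorem stmt_16 :
    Submodule.span (chartRing n)
        (Set.range (KaehlerDifferential.map ℂ ℂ (coneRing n) (chartRing n))) =
      Submodule.span (chartRing n)
        ({KaehlerDifferential.D ℂ (chartRing n) (sVar n (Fin.last n))} ∪
          Set.range fun i : Fin n =>
            sVar n (Fin.last n) •
              KaehlerDifferential.D ℂ (chartRing n) (sVar n i.castSucc)) := by
  set D := KaehlerDifferential.D ℂ (chartRing n) with hDdef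
  set M := Submodule.span (chartRing n)
        ({D (sVar n (Fin.last n))} ∪
          Set.range fun i : Fin n =>
            sVar n (Fin.last n) • D (sVar n i.castSucc)) with hM
  have hlast : D (sVar n (Fin.last n)) ∈ M :=
    Submodule.subset_span (Or.inl rfl)
  have hcast : ∀ j : Fin n, sVar n (Fin.last n) • D (sVar n j.castSucc) ∈ M :=
    fun j => Submodule.subset_span (Or.inr ⟨j, rfl⟩)
  have hvar : ∀ i : Fin (n + 1),
      D (algebraMap (coneRing n) (chartRing n) (Ideal.Quotient.mk _ (X i))) ∈ M := by
    intro i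
    rw [algebraMap_mk, aeval_X]
    induction i using Fin.lastCases with
    | last => rw [if_pos rfl]; exact hlast
    | cast j =>
        rw [if_neg (Fin.ne_of_lt (Fin.castSucc_lt_last j))]
        rw [Derivation.leibniz]
        exact add_mem (Submodule.smul_mem M _ hlast) (hcast j)
  have hD : ∀ r : coneRing n, D (algebraMap (coneRing n) (chartRing n) r) ∈ M := by
    intro r
    obtain ⟨p, rfl⟩ := Ideal.Quotient.mk_surjective r
    induction p using MvPolynomial.induction_on with
    | C a =>
        have : algebraMap (coneRing n) (chartRing n) (Ideal.Quotient.mk _ (C a)) =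
            algebraMap ℂ (chartRing n) a := by rw [algebraMap_mk, aeval_C]
        rw [this, Derivation.map_algebraMap]
        exact zero_mem M
    | add p q hp hq =>
        rw [map_add, map_add, map_add]
        exact add_mem hp hq
    | mul_X p i hp =>
        rw [map_mul, map_mul, Derivation.leibniz]
        exact add_mem (Submodule.smul_mem M _ (hvar i)) (Submodule.smul_mem M _ hp)
  apply le_antisymm
  · rw [Submodule.span_le]
    rintro _ ⟨ω, rfl⟩
    have hω : ω ∈ Submodule.span (coneRing n)
        (Set.range (KaehlerDifferential.D ℂ (coneRing n))) := by
      rw [KaehlerDifferential.span_range_derivation]; trivial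
    induction hω using Submodule.span_induction with
    | mem x hx =>
        obtain ⟨r, rfl⟩ := hx
        rw [KaehlerDifferential.map_D]
        exact hD r
    | zero => rw [map_zero]; exact zero_mem M
    | add x y _ _ hx hy => rw [map_add]; exact add_mem hx hy
    | smul r x _ hx =>
        rw [map_smul]
        exact Submodule.smul_of_tower_mem M r hx
  · rw [Submodule.span_le]
    have hmem : ∀ i : Fin (n + 1),
        D (algebraMap (coneRing n) (chartRing n) (Ideal.Quotient.mk _ (X i))) ∈
          Submodule.span (chartRing n)
            (Set.range (KaehlerDifferential.map ℂ ℂ (coneRing n) (chartRing n))) := by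
      intro i
      rw [← KaehlerDifferential.map_D ℂ ℂ (coneRing n) (chartRing n)]
      exact Submodule.subset_span ⟨_, rfl⟩
    rintro ω (rfl | ⟨j, rfl⟩)
    · have := hmem (Fin.last n)
      rwa [algebraMap_mk, aeval_X, if_pos rfl] at this
    · have h1 := hmem j.castSucc
      rw [algebraMap_mk, aeval_X, if_neg (Fin.ne_of_lt (Fin.castSucc_lt_last j)),
        Derivation.leibniz] at h1
      have h2 := hmem (Fin.last n)
      rw [algebraMap_mk, aeval_X, if_pos rfl] at h2
      have h3 : sVar n (Fin.last n) • D (sVar n j.castSucc) =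
          (sVar n j.castSucc • D (sVar n (Fin.last n)) +
            sVar n (Fin.last n) • D (sVar n j.castSucc)) -
          sVar n j.castSucc • D (sVar n (Fin.last n)) := by abel
      show sVar n (Fin.last n) • D (sVar n j.castSucc) ∈ _
      rw [h3]
      exact sub_mem h1 (Submodule.smul_mem _ _ h2)

end
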